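/- Let (Q,+) be a diassociative loop and let f, g be endomorphisms of (Q,+). If f is m-quasicentral and g is n-quasicentral (for integers m, n), then the composition f∘g is (-mn)-quasicentral. In particular, the composition of two quasicentral endomorphisms of (Q,+) is quasicentral. -/

import Mathlib

/- Preamble: diassociative loops, written additively.
   A loop is a set with `+`, a neutral element `0`, and unique left/right
   solvability.  Diassociativity is stated as: the subloop generated by any
   two elements (closure under `+`, negation and both divisions) is
   associative; in particular every element has a two-sided inverse `-x`
   (included as part of the structure, as it is uniquely determined). -/

universe u

section Preamble
variable {Q : Type u}

/-- Membership in the subloop of `Q` generated by the pair `a, b`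
    (closure under `0`, negation, addition and both divisions). -/
inductive GenBy [Add Q] [Zero Q] [Neg Q] (a b : Q) : Q → Prop
  | base_left : GenBy a b a
  | base_right : GenBy a b b
  | zero : GenBy a b 0
  | neg : ∀ x, GenBy a b x → GenBy a b (-x)
  | add : ∀ x y, GenBy a b x → GenBy a b y → GenBy a b (x + y)
  | ldiv : ∀ x y z, GenBy a b x → GenBy a b y → x + z = y → GenBy a b z
  | rdiv : ∀ x y z, GenBy a b x → GenBy a b y → z + x = y → GenBy a b z

/-- A diassociative loop `(Q,+)`: a loop in which the subloop generated by
    any pair of elements is a group (stated as associativity on that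
    subloop); every element has a two-sided inverse `-x`. -/
class DiassocLoop (Q : Type u) extends Add Q, Zero Q, Neg Q where
  zero_add : ∀ x : Q, 0 + x = x
  add_zero : ∀ x : Q, x + 0 = x
  exu_left : ∀ a b : Q, ∃! x : Q, a + x = b
  exu_right : ∀ a b : Q, ∃! y : Q, y + a = b
  neg_add_cancel : ∀ x : Q, -x + x = 0
  add_neg_cancel : ∀ x : Q, x + -x = 0
  diassoc : ∀ a b x y z : Q, GenBy a b x → GenBy a b y → GenBy a b z →
      (x + y) + z = x + (y + z)

variable [Add Q] [Zero Q] [Neg Q]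

/-- Natural multiple `n • x = x + (x + (⋯ + 0))`. -/
def nsmulL : ℕ → Q → Q
  | 0, _ => 0
  | n + 1, x => x + nsmulL n x

/-- Integer multiple `m • x` (unambiguous by diassociativity). -/
def zsmulL : ℤ → Q → Q
  | Int.ofNat n, x => nsmulL n x
  | Int.negSucc n, x => -(nsmulL (n + 1) x)

/-- `a` belongs to the nucleus `N(Q,+)`. -/
def inNucleus (a : Q) : Prop :=
  ∀ x y : Q, (a + x) + y = a + (x + y) ∧ (x + a) + y = x + (a + y) ∧
    (x + y) + a = x + (y + a)

/-- `a` belongs to the Moufang center `K(Q,+)`. -/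
def inMoufangCenter (a : Q) : Prop :=
  ∀ x y : Q, (a + a) + (x + y) = (a + x) + (a + y)

/-- `a` belongs to the center `Z(Q,+) = N(Q,+) ∩ K(Q,+)`. -/
def inCenter (a : Q) : Prop := inNucleus a ∧ inMoufangCenter a

/-- `f` is an endomorphism of `(Q,+)`. -/
def IsEndo (f : Q → Q) : Prop := ∀ x y : Q, f (x + y) = f x + f y

/-- `f` is a central endomorphism of `(Q,+)`: an endomorphism with
    `f(Q) ⊆ Z(Q,+)`. -/
def IsCentralEndo (f : Q → Q) : Prop := IsEndo f ∧ ∀ x : Q, inCenter (f x)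

/-- `f` is an `m`-quasicentral endomorphism of `(Q,+)`:
    `m•x + f(x) ∈ Z(Q,+)` for all `x`. -/
def IsQuasicentral (m : ℤ) (f : Q → Q) : Prop :=
  IsEndo f ∧ ∀ x : Q, inCenter (zsmulL m x + f x)

end Preamble
section Aux
variable {Q : Type u} [DiassocLoop Q]

lemma za (x : Q) : (0:Q) + x = x := DiassocLoop.zero_add x
lemma az (x : Q) : x + (0:Q) = x := DiassocLoop.add_zero x
lemma nac (x : Q) : -x + x = (0:Q) := DiassocLoop.neg_add_cancel x
lemma anc (x : Q) : x + -x = (0:Q) := DiassocLoop.add_neg_cancel x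

lemma dl_left_cancel {a x y : Q} (h : a + x = a + y) : x = y := by
  obtain ⟨u, _, hu⟩ := DiassocLoop.exu_left a (a + y)
  exact (hu x h).trans (hu y rfl).symm

lemma dl_right_cancel {a x y : Q} (h : x + a = y + a) : x = y := by
  obtain ⟨u, _, hu⟩ := DiassocLoop.exu_right a (y + a)
  exact (hu x h).trans (hu y rfl).symm

lemma dl_neg_uniq_r {a w : Q} (h : a + w = 0) : w = -a :=
  dl_left_cancel (h.trans (anc a).symm)

lemma dl_neg_uniq_l {a w : Q} (h : w + a = 0) : w = -a :=
  dl_right_cancel (h.trans (nac a).symm)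

/-- left division: `-a + (a + b) = b`. -/
lemma dl_la (a b : Q) : -a + (a + b) = b := by
  have := DiassocLoop.diassoc a b (-a) a b (GenBy.neg a GenBy.base_left)
    GenBy.base_left GenBy.base_right
  rw [← this, nac, za]

-- nucleus accessors
lemma n1 {z : Q} (hz : inNucleus z) (x y : Q) : (z + x) + y = z + (x + y) := (hz x y).1
lemma n2 {z : Q} (hz : inNucleus z) (x y : Q) : (x + z) + y = x + (z + y) := (hz x y).2.1
lemma n3 {z : Q} (hz : inNucleus z) (x y : Q) : (x + y) + z = x + (y + z) := (hz x y).2.2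

lemma center_comm {z : Q} (hz : inCenter z) (x : Q) : z + x = x + z := by
  have hm := hz.2 x 0
  rw [az, az] at hm
  have h1 : (z + z) + x = z + (z + x) := n1 hz.1 z x
  have h2 : (z + x) + z = z + (x + z) := n1 hz.1 x z
  exact dl_left_cancel ((h1.symm.trans hm).trans h2)

lemma center_of_nucleus_comm {z : Q} (hn : inNucleus z) (hc : ∀ x : Q, z + x = x + z) :
    inCenter z := by
  refine ⟨hn, fun u v => ?_⟩
  calc (z + z) + (u + v) = z + (z + (u + v)) := n1 hn _ _
    _ = z + ((z + u) + v) := by rw [n1 hn u v]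
    _ = (z + (z + u)) + v := (n1 hn _ _).symm
    _ = (z + (u + z)) + v := by rw [hc u]
    _ = ((z + u) + z) + v := by rw [n1 hn u z]
    _ = (z + u) + (z + v) := n2 hn _ _

lemma center_zero : inCenter (0 : Q) := by
  refine ⟨fun x y => ⟨?_, ?_, ?_⟩, fun x y => ?_⟩ <;> simp only [za, az]

lemma center_add {y z : Q} (hy : inCenter y) (hz : inCenter z) : inCenter (y + z) := by
  have ny := hy.1; have nz := hz.1
  have cy := center_comm hy; have cz := center_comm hz
  have hn : inNucleus (y + z) := by
    intro u v
    refine ⟨?_, ?_, ?_⟩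
    · calc ((y + z) + u) + v = (y + (z + u)) + v := by rw [n1 ny z u]
        _ = y + ((z + u) + v) := n1 ny _ _
        _ = y + (z + (u + v)) := by rw [n1 nz u v]
        _ = (y + z) + (u + v) := (n1 ny _ _).symm
    · calc (u + (y + z)) + v = ((u + y) + z) + v := by rw [n3 nz u y]
        _ = (u + y) + (z + v) := n2 nz _ _
        _ = u + (y + (z + v)) := n2 ny _ _
        _ = u + ((y + z) + v) := by rw [n1 ny z v]
    · calc (u + v) + (y + z) = ((u + v) + y) + z := (n3 nz _ _).symm
        _ = (u + (v + y)) + z := by rw [n3 ny u v]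
        _ = u + ((v + y) + z) := n3 nz _ _
        _ = u + (v + (y + z)) := by rw [n3 nz v y]
  refine center_of_nucleus_comm hn (fun u => ?_)
  calc (y + z) + u = y + (z + u) := n1 ny z u
    _ = y + (u + z) := by rw [cz u]
    _ = (y + u) + z := (n1 ny u z).symm
    _ = (u + y) + z := by rw [cy u]
    _ = u + (y + z) := n3 nz u y

lemma center_neg {z : Q} (hz : inCenter z) : inCenter (-z) := by
  have nz := hz.1; have cz := center_comm hz
  have ccomm : ∀ x : Q, -z + x = x + -z := by
    intro x
    apply dl_left_cancel (a := z)
    calc z + (-z + x) = (z + -z) + x := (n1 nz _ _).symm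
      _ = x := by rw [anc, za]
      _ = x + (z + -z) := by rw [anc, az]
      _ = (x + z) + -z := (n2 nz x (-z)).symm
      _ = (z + x) + -z := by rw [cz x]
      _ = z + (x + -z) := n1 nz x (-z)
  have na1 : ∀ u v : Q, (-z + u) + v = -z + (u + v) := by
    intro u v
    apply dl_left_cancel (a := z)
    calc z + ((-z + u) + v) = (z + (-z + u)) + v := (n1 nz _ _).symm
      _ = ((z + -z) + u) + v := by rw [n1 nz (-z) u]
      _ = u + v := by rw [anc, za]
      _ = (z + -z) + (u + v) := by rw [anc, za]
      _ = z + (-z + (u + v)) := n1 nz _ _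
  have na3 : ∀ u v : Q, (u + v) + -z = u + (v + -z) := by
    intro u v
    apply dl_right_cancel (a := z)
    calc ((u + v) + -z) + z = (u + v) + (-z + z) := n3 nz _ _
      _ = u + v := by rw [nac, az]
      _ = u + (v + (-z + z)) := by rw [nac, az]
      _ = u + ((v + -z) + z) := by rw [n3 nz v (-z)]
      _ = (u + (v + -z)) + z := (n3 nz _ _).symm
  have hn : inNucleus (-z) := by
    intro u v
    refine ⟨na1 u v, ?_, na3 u v⟩
    calc (u + -z) + v = (-z + u) + v := by rw [ccomm u]
      _ = -z + (u + v) := na1 u v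
      _ = (u + v) + -z := ccomm _
      _ = u + (v + -z) := na3 u v
      _ = u + (-z + v) := by rw [ccomm v]
  exact center_of_nucleus_comm hn ccomm

end Aux
section Cyc
variable {Q : Type u} [DiassocLoop Q] (x : Q)

lemma gax {a b c : Q} (ha : GenBy x x a) (hb : GenBy x x b) (hc : GenBy x x c) :
    (a + b) + c = a + (b + c) := DiassocLoop.diassoc x x a b c ha hb hc

lemma gb_nsmul {y : Q} (hy : GenBy x x y) (k : ℕ) : GenBy x x (nsmulL k y) := by
  induction k with
  | zero => exact GenBy.zero
  | succ k ih => exact GenBy.add _ _ hy ih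

lemma gb_zsmul {y : Q} (hy : GenBy x x y) (p : ℤ) : GenBy x x (zsmulL p y) := by
  cases p with
  | ofNat n => exact gb_nsmul x hy n
  | negSucc n => exact GenBy.neg _ (gb_nsmul x hy (n + 1))

lemma gcomm_x {v : Q} (hv : GenBy x x v) : x + v = v + x := by
  induction hv with
  | base_left => rfl
  | base_right => rfl
  | zero => rw [za, az]
  | neg w hw ih =>
    apply dl_left_cancel (a := w)
    calc w + (x + -w) = (w + x) + -w := (gax x hw GenBy.base_left (GenBy.neg _ hw)).symm
      _ = (x + w) + -w := by rw [ih]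
      _ = x + (w + -w) := gax x GenBy.base_left hw (GenBy.neg _ hw)
      _ = x := by rw [anc, az]
      _ = (w + -w) + x := by rw [anc, za]
      _ = w + (-w + x) := gax x hw (GenBy.neg _ hw) GenBy.base_left
  | add a b ha hb iha ihb =>
    calc x + (a + b) = (x + a) + b := (gax x GenBy.base_left ha hb).symm
      _ = (a + x) + b := by rw [iha]
      _ = a + (x + b) := gax x ha GenBy.base_left hb
      _ = a + (b + x) := by rw [ihb]
      _ = (a + b) + x := (gax x ha hb GenBy.base_left).symm
  | ldiv a b c ha hb hab iha ihb =>
    have hc : GenBy x x c := GenBy.ldiv a b c ha hb hab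
    apply dl_left_cancel (a := a)
    calc a + (x + c) = (a + x) + c := (gax x ha GenBy.base_left hc).symm
      _ = (x + a) + c := by rw [iha]
      _ = x + (a + c) := gax x GenBy.base_left ha hc
      _ = x + b := by rw [hab]
      _ = b + x := ihb
      _ = (a + c) + x := by rw [hab]
      _ = a + (c + x) := gax x ha hc GenBy.base_left
  | rdiv a b c ha hb hab iha ihb =>
    have hc : GenBy x x c := GenBy.rdiv a b c ha hb hab
    apply dl_right_cancel (a := a)
    calc (x + c) + a = x + (c + a) := gax x GenBy.base_left hc ha
      _ = x + b := by rw [hab]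
      _ = b + x := ihb
      _ = (c + a) + x := by rw [hab]
      _ = c + (a + x) := gax x hc ha GenBy.base_left
      _ = c + (x + a) := by rw [iha]
      _ = (c + x) + a := (gax x hc GenBy.base_left ha).symm

lemma gcomm {u : Q} (hu : GenBy x x u) : ∀ {v : Q}, GenBy x x v → u + v = v + u := by
  induction hu with
  | base_left => intro v hv; exact gcomm_x x hv
  | base_right => intro v hv; exact gcomm_x x hv
  | zero => intro v hv; rw [za, az]
  | neg a ha ih =>
    intro v hv
    apply dl_left_cancel (a := a)
    calc a + (-a + v) = (a + -a) + v := (gax x ha (GenBy.neg _ ha) hv).symm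
      _ = v := by rw [anc, za]
      _ = v + (a + -a) := by rw [anc, az]
      _ = (v + a) + -a := (gax x hv ha (GenBy.neg _ ha)).symm
      _ = (a + v) + -a := by rw [ih hv]
      _ = a + (v + -a) := gax x ha hv (GenBy.neg _ ha)
  | add a b ha hb iha ihb =>
    intro v hv
    calc (a + b) + v = a + (b + v) := gax x ha hb hv
      _ = a + (v + b) := by rw [ihb hv]
      _ = (a + v) + b := (gax x ha hv hb).symm
      _ = (v + a) + b := by rw [iha hv]
      _ = v + (a + b) := gax x hv ha hb
  | ldiv a b c ha hb hab iha ihb =>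
    intro v hv
    have hc : GenBy x x c := GenBy.ldiv a b c ha hb hab
    apply dl_left_cancel (a := a)
    calc a + (c + v) = (a + c) + v := (gax x ha hc hv).symm
      _ = b + v := by rw [hab]
      _ = v + b := ihb hv
      _ = v + (a + c) := by rw [hab]
      _ = (v + a) + c := (gax x hv ha hc).symm
      _ = (a + v) + c := by rw [iha hv]
      _ = a + (v + c) := gax x ha hv hc
  | rdiv a b c ha hb hab iha ihb =>
    intro v hv
    have hc : GenBy x x c := GenBy.rdiv a b c ha hb hab
    apply dl_right_cancel (a := a)
    calc (c + v) + a = c + (v + a) := gax x hc hv ha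
      _ = c + (a + v) := by rw [← iha hv]
      _ = (c + a) + v := (gax x hc ha hv).symm
      _ = b + v := by rw [hab]
      _ = v + b := ihb hv
      _ = v + (c + a) := by rw [hab]
      _ = (v + c) + a := (gax x hv hc ha).symm

/-- `-(u+v) = -v + -u` within the subloop. -/
lemma gneg_add {u v : Q} (hu : GenBy x x u) (hv : GenBy x x v) : -(u + v) = -v + -u := by
  symm
  apply dl_neg_uniq_r
  calc (u + v) + (-v + -u) = u + (v + (-v + -u)) :=
        gax x hu hv (GenBy.add _ _ (GenBy.neg _ hv) (GenBy.neg _ hu))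
    _ = u + ((v + -v) + -u) := by rw [gax x hv (GenBy.neg _ hv) (GenBy.neg _ hu)]
    _ = 0 := by rw [anc, za, anc]

end Cyc
section ZS
variable {Q : Type u} [DiassocLoop Q] (x : Q)

lemma zs_coe (n : ℕ) (y : Q) : zsmulL (n : ℤ) y = nsmulL n y := rfl
lemma zs_zero (y : Q) : zsmulL 0 y = 0 := rfl

lemma zs_succ {y : Q} (hy : GenBy x x y) (p : ℤ) : zsmulL (p + 1) y = y + zsmulL p y := by
  cases p with
  | ofNat n =>
    rw [show (Int.ofNat n + 1 : ℤ) = Int.ofNat (n + 1) from rfl]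
    rfl
  | negSucc n =>
    cases n with
    | zero =>
      rw [show (Int.negSucc 0 + 1 : ℤ) = 0 from rfl]
      show (0 : Q) = y + -(nsmulL 1 y)
      show (0 : Q) = y + -(y + nsmulL 0 y)
      rw [show nsmulL 0 y = (0:Q) from rfl, az, anc]
    | succ n =>
      rw [show (Int.negSucc (n + 1) + 1 : ℤ) = Int.negSucc n from rfl]
      show -(nsmulL (n + 1) y) = y + -(nsmulL (n + 2) y)
      have hu : GenBy x x (nsmulL (n + 1) y) := gb_nsmul x hy (n + 1)
      have : nsmulL (n + 2) y = y + nsmulL (n + 1) y := rfl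
      rw [this, gcomm x hy hu, gneg_add x hu hy]
      calc -(nsmulL (n + 1) y)
          = (y + -y) + -(nsmulL (n + 1) y) := by rw [anc, za]
        _ = y + (-y + -(nsmulL (n + 1) y)) :=
            gax x hy (GenBy.neg _ hy) (GenBy.neg _ hu)

lemma zs_pred {y : Q} (hy : GenBy x x y) (p : ℤ) : zsmulL (p - 1) y = -y + zsmulL p y := by
  cases p with
  | ofNat n =>
    cases n with
    | zero =>
      rw [show (Int.ofNat 0 - 1 : ℤ) = Int.negSucc 0 from rfl]
      show -(nsmulL 1 y) = -y + nsmulL 0 y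
      show -(y + nsmulL 0 y) = -y + nsmulL 0 y
      rw [show nsmulL 0 y = (0:Q) from rfl, az, az]
    | succ n =>
      rw [show (Int.ofNat (n + 1) - 1 : ℤ) = Int.ofNat n by simp only [Int.ofNat_eq_natCast]; omega]
      show nsmulL n y = -y + nsmulL (n + 1) y
      show nsmulL n y = -y + (y + nsmulL n y)
      rw [dl_la]
  | negSucc n =>
    rw [show (Int.negSucc n - 1 : ℤ) = Int.negSucc (n + 1) from rfl]
    show -(nsmulL (n + 2) y) = -y + -(nsmulL (n + 1) y)
    have hu : GenBy x x (nsmulL (n + 1) y) := gb_nsmul x hy (n + 1)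
    have : nsmulL (n + 2) y = y + nsmulL (n + 1) y := rfl
    rw [this, gcomm x hy hu, gneg_add x hu hy]

lemma gswap {a b c : Q} (ha : GenBy x x a) (hb : GenBy x x b) (hc : GenBy x x c) :
    a + (b + c) = b + (a + c) := by
  calc a + (b + c) = (a + b) + c := (gax x ha hb hc).symm
    _ = (b + a) + c := by rw [gcomm x ha hb]
    _ = b + (a + c) := gax x hb ha hc

lemma zs_add {y : Q} (hy : GenBy x x y) (p q : ℤ) :
    zsmulL (p + q) y = zsmulL p y + zsmulL q y := by
  induction q using Int.induction_on with
  | zero => rw [add_zero, zs_zero, az]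
  | succ k ih =>
    rw [show p + ((k : ℤ) + 1) = (p + k) + 1 by ring, zs_succ x hy, ih, zs_succ x hy]
    exact gswap x hy (gb_zsmul x hy p) (gb_zsmul x hy k)
  | pred k ih =>
    rw [show p + (-(k : ℤ) - 1) = (p + -k) - 1 by ring, zs_pred x hy, ih, zs_pred x hy]
    exact gswap x (GenBy.neg _ hy) (gb_zsmul x hy p) (gb_zsmul x hy (-k))

lemma zs_neg {y : Q} (hy : GenBy x x y) (p : ℤ) : zsmulL (-p) y = -(zsmulL p y) := by
  apply dl_neg_uniq_r
  rw [← zs_add x hy, add_neg_cancel]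
  rfl

lemma zs_mul (p q : ℤ) : zsmulL p (zsmulL q x) = zsmulL (p * q) x := by
  have hq : GenBy x x (zsmulL q x) := gb_zsmul x GenBy.base_left q
  induction p using Int.induction_on with
  | zero => rw [zero_mul]; rfl
  | succ k ih =>
    rw [zs_succ x hq, ih, show ((k : ℤ) + 1) * q = q + k * q by ring,
      zs_add x GenBy.base_left]
  | pred k ih =>
    rw [zs_pred x hq, ih, show (-(k : ℤ) - 1) * q = -q + -k * q by ring,
      zs_add x GenBy.base_left, zs_neg x GenBy.base_left]

end ZS
section Fin
variable {Q : Type u} [DiassocLoop Q]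

lemma center_nsmul {z : Q} (hz : inCenter z) (k : ℕ) : inCenter (nsmulL k z) := by
  induction k with
  | zero => exact center_zero
  | succ k ih => exact center_add hz ih

lemma center_zsmul {z : Q} (hz : inCenter z) (p : ℤ) : inCenter (zsmulL p z) := by
  cases p with
  | ofNat n => exact center_nsmul hz n
  | negSucc n => exact center_neg (center_nsmul hz (n + 1))

/-- `-(a + z) = -a + -z` when `z` is central. -/
lemma neg_add_central {z : Q} (hz : inCenter z) (a : Q) : -(a + z) = -a + -z := by
  symm
  apply dl_neg_uniq_r
  have nz := hz.1
  calc (a + z) + (-a + -z) = a + (z + (-a + -z)) := n2 nz a _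
    _ = a + ((-a + -z) + z) := by rw [center_comm hz]
    _ = a + (-a + (-z + z)) := by rw [n3 nz (-a) (-z)]
    _ = 0 := by rw [nac, az, anc]

lemma nsmul_add_central {z : Q} (hz : inCenter z) (k : ℕ) (a : Q) :
    nsmulL k (a + z) = nsmulL k a + nsmulL k z := by
  have nz := hz.1
  induction k with
  | zero => exact (za 0).symm
  | succ k ih =>
    have hZk : inCenter (nsmulL k z) := center_nsmul hz k
    have hZk1 : inCenter (nsmulL (k + 1) z) := center_nsmul hz (k + 1)
    show (a + z) + nsmulL k (a + z) = (a + nsmulL k a) + nsmulL (k + 1) z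
    calc (a + z) + nsmulL k (a + z)
        = (a + z) + (nsmulL k a + nsmulL k z) := by rw [ih]
      _ = a + (z + (nsmulL k a + nsmulL k z)) := n2 nz a _
      _ = a + ((nsmulL k a + nsmulL k z) + z) := by rw [center_comm hz]
      _ = a + (nsmulL k a + (nsmulL k z + z)) := by rw [n3 nz (nsmulL k a) (nsmulL k z)]
      _ = a + (nsmulL k a + (z + nsmulL k z)) := by rw [center_comm hz (nsmulL k z)]
      _ = a + (nsmulL k a + nsmulL (k + 1) z) := rfl
      _ = (a + nsmulL k a) + nsmulL (k + 1) z := (n3 hZk1.1 a (nsmulL k a)).symm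

lemma zsmul_add_central {z : Q} (hz : inCenter z) (p : ℤ) (a : Q) :
    zsmulL p (a + z) = zsmulL p a + zsmulL p z := by
  cases p with
  | ofNat n => exact nsmul_add_central hz n a
  | negSucc n =>
    show -(nsmulL (n + 1) (a + z)) = -(nsmulL (n + 1) a) + -(nsmulL (n + 1) z)
    rw [nsmul_add_central hz, neg_add_central (center_nsmul hz (n + 1))]

lemma endo_zero {f : Q → Q} (hf : IsEndo f) : f 0 = 0 := by
  apply dl_left_cancel (a := f 0)
  rw [← hf 0 0, za, az]

lemma endo_neg {f : Q → Q} (hf : IsEndo f) (a : Q) : f (-a) = -(f a) := by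
  apply dl_neg_uniq_l
  rw [← hf (-a) a, nac, endo_zero hf]

lemma endo_nsmul {f : Q → Q} (hf : IsEndo f) (k : ℕ) (a : Q) :
    f (nsmulL k a) = nsmulL k (f a) := by
  induction k with
  | zero => exact endo_zero hf
  | succ k ih => show f (a + nsmulL k a) = f a + nsmulL k (f a); rw [hf, ih]

lemma endo_zsmul {f : Q → Q} (hf : IsEndo f) (p : ℤ) (a : Q) :
    f (zsmulL p a) = zsmulL p (f a) := by
  cases p with
  | ofNat n => exact endo_nsmul hf n a
  | negSucc n =>
    show f (-(nsmulL (n + 1) a)) = -(nsmulL (n + 1) (f a))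
    rw [endo_neg hf, endo_nsmul hf]

lemma quasicentral_comp_key {Q : Type u} [DiassocLoop Q] (m n : ℤ) (f g : Q → Q)
    (hf : IsQuasicentral m f) (hg : IsQuasicentral n g) :
    IsQuasicentral (-(m * n)) (f ∘ g) := by
  constructor
  · intro u v
    show f (g (u + v)) = f (g u) + f (g v)
    rw [hg.1, hf.1]
  intro x
  show inCenter (zsmulL (-(m * n)) x + f (g x))
  have gl : GenBy x x x := GenBy.base_left
  -- central data
  have Hh : inCenter (zsmulL n x + g x) := hg.2 x
  have Hk : inCenter (zsmulL m x + f x) := hf.2 x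
  have Hc1 : inCenter (f (zsmulL n x + g x)) := by
    have h2 := hf.2 (zsmulL n x + g x)
    have e : f (zsmulL n x + g x) =
        -(zsmulL m (zsmulL n x + g x)) +
          (zsmulL m (zsmulL n x + g x) + f (zsmulL n x + g x)) := (dl_la _ _).symm
    rw [e]
    exact center_add (center_neg (center_zsmul Hh m)) h2
  have Hc2 : inCenter (zsmulL n (zsmulL m x + f x)) := center_zsmul Hk n
  have Hc3 : inCenter (-(zsmulL n (zsmulL m x + f x)) + f (zsmulL n x + g x)) :=
    center_add (center_neg Hc2) Hc1
  -- expand f (g x)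
  have hg1 : g x = -(zsmulL n x) + (zsmulL n x + g x) := (dl_la _ _).symm
  have e1 : f (g x) = -(zsmulL n (f x)) + f (zsmulL n x + g x) := by
    conv_lhs => rw [hg1]
    rw [hf.1, endo_neg hf.1, endo_zsmul hf.1]
  -- expand zsmulL n (f x)
  have hf1 : f x = -(zsmulL m x) + (zsmulL m x + f x) := (dl_la _ _).symm
  have e2 : zsmulL n (f x) =
      zsmulL (-(m * n)) x + zsmulL n (zsmulL m x + f x) := by
    conv_lhs => rw [hf1]
    rw [show -(zsmulL m x) = zsmulL (-m) x from (zs_neg x gl m).symm,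
      zsmul_add_central Hk n, zs_mul x n (-m), show n * -m = -(m * n) by ring]
  have e3 : -(zsmulL n (f x)) =
      zsmulL (m * n) x + -(zsmulL n (zsmulL m x + f x)) := by
    rw [e2, neg_add_central Hc2]
    congr 1
    have h := zs_neg x gl (-(m * n))
    rw [neg_neg] at h
    exact h.symm
  -- assemble
  have e4 : zsmulL (-(m * n)) x + f (g x) =
      -(zsmulL n (zsmulL m x + f x)) + f (zsmulL n x + g x) := by
    rw [e1, e3]
    calc zsmulL (-(m * n)) x +
          ((zsmulL (m * n) x + -(zsmulL n (zsmulL m x + f x))) + f (zsmulL n x + g x))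
        = zsmulL (-(m * n)) x +
          (zsmulL (m * n) x + (-(zsmulL n (zsmulL m x + f x)) + f (zsmulL n x + g x))) := by
          rw [n3 Hc1.1 (zsmulL (m * n) x) (-(zsmulL n (zsmulL m x + f x)))]
      _ = (zsmulL (-(m * n)) x + zsmulL (m * n) x) +
          (-(zsmulL n (zsmulL m x + f x)) + f (zsmulL n x + g x)) := (n3 Hc3.1 _ _).symm
      _ = zsmulL (-(m * n) + m * n) x +
          (-(zsmulL n (zsmulL m x + f x)) + f (zsmulL n x + g x)) := by
          rw [zs_add x gl (-(m * n)) (m * n)]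
      _ = -(zsmulL n (zsmulL m x + f x)) + f (zsmulL n x + g x) := by
          rw [neg_add_cancel, zs_zero, za]
  rw [e4]
  exact Hc3

end Fin


/- STATEMENT 2: Lemma 2.4.  If `f` is `m`-quasicentral and `g` is
   `n`-quasicentral, then `f ∘ g` is `(-mn)`-quasicentral; in particular the
   composition of quasicentral endomorphisms is quasicentral. -/
theorem quasicentral_comp {Q : Type u} [DiassocLoop Q] :
    (∀ (m n : ℤ) (f g : Q → Q), IsQuasicentral m f → IsQuasicentral n g →
      IsQuasicentral (-(m * n)) (f ∘ g)) ∧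
    (∀ f g : Q → Q, (∃ m : ℤ, IsQuasicentral m f) → (∃ n : ℤ, IsQuasicentral n g) →
      ∃ k : ℤ, IsQuasicentral k (f ∘ g)) := by
  refine ⟨quasicentral_comp_key, ?_⟩
  rintro f g ⟨m, hf⟩ ⟨n, hg⟩
  exact ⟨-(m * n), quasicentral_comp_key m n f g hf hg⟩
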